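/- Let Z = (z_1, …, z_n) with 0 < z_1 < … < z_n. Then the invariant |V_Z| is a Vassiliev invariant of degree at most n in the following combinatorial sense: for every Gauss diagram G, every m ≥ n + 1, and every choice of m distinct chords x_1, …, x_m of G, one has Σ_{ε ∈ {±1}^m} (ε_1 ε_2 ⋯ ε_m) · |V_Z(G_{(ε, x̄)})| = 0, where G_{(ε, x̄)} is the Gauss diagram obtained from G by flipping (interchanging head and foot and negating the sign of) each chord x_i with ε_i = −1. -/

import Mathlib

/-! ## Gauss diagrams and parity -/

/-- `arc a b p` : position `p` lies strictly inside the arc traversed in the positive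
direction from `a` to `b` on a circle whose positions are numbered `0, 1, 2, …`
in the positive direction. -/
def arc (a b p : ℕ) : Bool :=
  if a < b then decide (a < p ∧ p < b) else decide (p < b ∨ a < p)

/-- A Gauss diagram: `n` signed oriented chords whose `2n` endpoints are placed on the
`2n` points of an oriented circle.  Chord `i` has its head (arrowhead) at position
`head i`, its foot at position `foot i`, and sign `sign i`. -/
structure GaussDiagram where
  n : ℕ
  head : Fin n → Fin (2 * n)
  foot : Fin n → Fin (2 * n)
  sign : Fin n → ℤ

namespace GaussDiagram

/-- A genuine Gauss diagram: all `2n` endpoints are distinct (hence they exhaust the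
`2n` circle positions) and every sign is `±1`. -/
def Proper (G : GaussDiagram) : Prop :=
  Function.Injective (Sum.elim G.head G.foot) ∧ ∀ i, G.sign i = 1 ∨ G.sign i = -1

/-- `G.crosses c x` : chord `x` intersects chord `c` (their endpoint pairs interleave
in the cyclic order), i.e. `x ∈ N_c`. -/
def crosses (G : GaussDiagram) (c x : Fin G.n) : Bool :=
  x != c &&
    (arc (G.head c).1 (G.foot c).1 (G.head x).1 != arc (G.head c).1 (G.foot c).1 (G.foot x).1)

/-- The intersection number `int_c(x)`: `+1` if the head of `x` lies on the arc traversed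
in the positive direction from the head of `c` to the foot of `c`, and `-1` otherwise. -/
def inter (G : GaussDiagram) (c x : Fin G.n) : ℤ :=
  if arc (G.head c).1 (G.foot c).1 (G.head x).1 then 1 else -1

/-- The parity of a chord: `p(c) = ∑_{x ∈ N_c} sgn(x) · int_c(x)`. -/
def parity (G : GaussDiagram) (c : Fin G.n) : ℤ :=
  ∑ x : Fin G.n, if G.crosses c x then G.sign x * G.inter c x else 0

end GaussDiagram

/-- The cyclic successor of a circle position. -/
def psucc {m : ℕ} (v : Fin m) : Fin m := ⟨(v.1 + 1) % m, Nat.mod_lt _ v.pos⟩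

/-- Two circle positions are adjacent. -/
def adjPos {m : ℕ} (u v : Fin m) : Prop := v = psucc u ∨ u = psucc v

/-- A map of circle positions preserving the cyclic order (in particular injective). -/
def CyclicMap {k l : ℕ} (φ : Fin k → Fin l) : Prop :=
  ∀ a b p : Fin k, arc a.1 b.1 p.1 = arc (φ a).1 (φ b).1 (φ p).1

/-- A map of circle positions reversing the cyclic order. -/
def AntiCyclicMap {k l : ℕ} (φ : Fin k → Fin l) : Prop :=
  ∀ a b p : Fin k, arc a.1 b.1 p.1 = arc (φ b).1 (φ a).1 (φ p).1

/-! ## The chord moves -/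

/-- The single chord move: `G'` is obtained from `G` by inserting one chord `y` whose two
endpoints occupy adjacent positions on the circle; all old chords keep their mutual cyclic
position (via the cyclic-order preserving map `φ`), their orientation and their sign. -/
def SingleChordMove (G G' : GaussDiagram) : Prop :=
  G.Proper ∧ G'.Proper ∧ G'.n = G.n + 1 ∧
  ∃ (e : Fin G.n → Fin G'.n) (φ : Fin (2 * G.n) → Fin (2 * G'.n)) (y : Fin G'.n),
    Function.Injective e ∧ (∀ i, e i ≠ y) ∧ CyclicMap φ ∧
    (∀ i, G'.head (e i) = φ (G.head i) ∧ G'.foot (e i) = φ (G.foot i) ∧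
      G'.sign (e i) = G.sign i) ∧
    adjPos (G'.head y) (G'.foot y)

/-- The two chord move: `G'` is obtained from `G` by inserting a pair of oppositely signed
chords `y₁, y₂` whose heads occupy adjacent positions and whose feet occupy adjacent
positions on the circle. -/
def TwoChordMove (G G' : GaussDiagram) : Prop :=
  G.Proper ∧ G'.Proper ∧ G'.n = G.n + 2 ∧
  ∃ (e : Fin G.n → Fin G'.n) (φ : Fin (2 * G.n) → Fin (2 * G'.n)) (y₁ y₂ : Fin G'.n),
    Function.Injective e ∧ y₁ ≠ y₂ ∧ (∀ i, e i ≠ y₁ ∧ e i ≠ y₂) ∧ CyclicMap φ ∧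
    (∀ i, G'.head (e i) = φ (G.head i) ∧ G'.foot (e i) = φ (G.foot i) ∧
      G'.sign (e i) = G.sign i) ∧
    adjPos (G'.head y₁) (G'.head y₂) ∧ adjPos (G'.foot y₁) (G'.foot y₂) ∧
    G'.sign y₁ = -G'.sign y₂

/-- The triangle (vertex) structure of three chords `x y z` of `G`: their six endpoints
form three pairs of adjacent circle positions (the vertices of a triangle), namely
`{w₁, w₁+1}` (two heads), `{w₂, w₂+1}` (two feet) and `{w₃, w₃+1}` (a head and a foot).
Chord `x` runs from the head–head vertex to the foot–foot vertex. -/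
def TriangleVertices (G : GaussDiagram) (x y z : Fin G.n) (w₁ w₂ w₃ : Fin (2 * G.n)) : Prop :=
  x ≠ y ∧ y ≠ z ∧ x ≠ z ∧
  ((G.head x = w₁ ∧ G.head y = psucc w₁) ∨ (G.head x = psucc w₁ ∧ G.head y = w₁)) ∧
  ((G.foot x = w₂ ∧ G.foot z = psucc w₂) ∨ (G.foot x = psucc w₂ ∧ G.foot z = w₂)) ∧
  ((G.foot y = w₃ ∧ G.head z = psucc w₃) ∨ (G.foot y = psucc w₃ ∧ G.head z = w₃))

/-- The admissible sign configurations for a triangle move on the chords `x y z`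
(`x` being the chord joining the head–head vertex to the foot–foot vertex):
these are the configurations exhibited in the paper together with their modifications
obtained by simultaneously reversing the sign and orientation of the two chords meeting
at the head–head vertex or at the foot–foot vertex.
In the (3,0) case the two chords `y, z` carry one sign and `x` the opposite sign; in the
(2,1) case the signs are governed by the pair of chords crossing on the one-intersection
side of the move. -/
def AdmissibleSigns (G G' : GaussDiagram) (x y z : Fin G.n) (x' y' z' : Fin G'.n) : Prop :=
  -- (3,0) triangle move
  (((G.crosses x y = false ∧ G.crosses y z = false ∧ G.crosses x z = false) ∨
    (G'.crosses x' y' = false ∧ G'.crosses y' z' = false ∧ G'.crosses x' z' = false)) ∧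
    G.sign y = G.sign z ∧ G.sign x = -G.sign y) ∨
  -- (2,1) triangle move, the single intersection being between x and y
  (((G.crosses x y = true ∧ G.crosses y z = false ∧ G.crosses x z = false) ∨
    (G'.crosses x' y' = true ∧ G'.crosses y' z' = false ∧ G'.crosses x' z' = false)) ∧
    G.sign y = -G.sign x ∧ G.sign z = G.sign x) ∨
  -- (2,1) triangle move, the single intersection being between x and z
  (((G.crosses x z = true ∧ G.crosses x y = false ∧ G.crosses y z = false) ∨
    (G'.crosses x' z' = true ∧ G'.crosses x' y' = false ∧ G'.crosses y' z' = false)) ∧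
    G.sign z = -G.sign x ∧ G.sign y = G.sign x) ∨
  -- (2,1) triangle move, the single intersection being between y and z
  (((G.crosses y z = true ∧ G.crosses x y = false ∧ G.crosses x z = false) ∨
    (G'.crosses y' z' = true ∧ G'.crosses x' y' = false ∧ G'.crosses x' z' = false)) ∧
    G.sign y = G.sign x ∧ G.sign z = G.sign x)

/-- The triangle move: three chords `x y z` of `G` forming a triangle with three
adjacent-position vertices (one head–head, one foot–foot, one mixed), in an admissible
sign/orientation configuration, slide past each other: in `G'` each pair of adjacent
endpoints has been interchanged, while everything else is unchanged. -/
def TriangleMove (G G' : GaussDiagram) : Prop :=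
  G.Proper ∧ G'.Proper ∧
  ∃ (e : Fin G.n → Fin G'.n) (φ : Fin (2 * G.n) → Fin (2 * G'.n))
    (x y z : Fin G.n) (w₁ w₂ w₃ : Fin (2 * G.n)),
    Function.Bijective e ∧ Function.Bijective φ ∧ CyclicMap φ ∧
    TriangleVertices G x y z w₁ w₂ w₃ ∧
    (∀ i, G'.sign (e i) = G.sign i) ∧
    (∀ i, i ≠ x → i ≠ y → i ≠ z →
      G'.head (e i) = φ (G.head i) ∧ G'.foot (e i) = φ (G.foot i)) ∧
    -- sliding: each of the six endpoints is exchanged with its partner in its vertex pair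
    ((G'.head (e x) = φ (G.head y) ∧ G'.head (e y) = φ (G.head x)) ∧
     (G'.foot (e x) = φ (G.foot z) ∧ G'.foot (e z) = φ (G.foot x)) ∧
     (G'.foot (e y) = φ (G.head z) ∧ G'.head (e z) = φ (G.foot y))) ∧
    AdmissibleSigns G G' x y z (e x) (e y) (e z)

/-- One chord move (in either direction) between Gauss diagrams. -/
def GaussMove (G G' : GaussDiagram) : Prop :=
  SingleChordMove G G' ∨ SingleChordMove G' G ∨
  TwoChordMove G G' ∨ TwoChordMove G' G ∨
  TriangleMove G G' ∨ TriangleMove G' G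

/-! ## Invariants from parity -/

namespace GaussDiagram

/-- `|A_i(G)|`: the signed cardinality of the set of chords of parity `i`. -/
def cardA (G : GaussDiagram) (i : ℤ) : ℤ :=
  ∑ c : Fin G.n, if G.parity c = i then G.sign c else 0

/-- `|A_Z(G)|`: the signed cardinality of the set of tuples of chords with parities
prescribed by `Z`. -/
def cardATuple (G : GaussDiagram) {k : ℕ} (Z : Fin k → ℤ) : ℤ :=
  ∑ t : Fin k → Fin G.n,
    if ∀ j, G.parity (t j) = Z j then ∏ j, G.sign (t j) else 0

/-- `|V_i(G)|`: the signed cardinality of the set of chords whose parity has absolute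
value `i`. -/
def cardV (G : GaussDiagram) (i : ℤ) : ℤ :=
  ∑ c : Fin G.n, if |G.parity c| = i then G.sign c else 0

/-- `|V_Z(G)|`: the signed cardinality of the set of tuples of chords whose parities have
absolute values prescribed by `Z`. -/
def cardVTuple (G : GaussDiagram) {k : ℕ} (Z : Fin k → ℤ) : ℤ :=
  ∑ t : Fin k → Fin G.n,
    if ∀ j, |G.parity (t j)| = Z j then ∏ j, G.sign (t j) else 0

/-- Flip (reverse the orientation of and negate the sign of) every chord in `S`;
this corresponds to crossing changes in the corresponding virtual knot diagram. -/
def flipSet (G : GaussDiagram) (S : Finset (Fin G.n)) : GaussDiagram where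
  n := G.n
  head := fun i => if i ∈ S then G.foot i else G.head i
  foot := fun i => if i ∈ S then G.head i else G.foot i
  sign := fun i => if i ∈ S then -G.sign i else G.sign i

end GaussDiagram

/-! ## Smoothing and flat diagrams -/

/-- The chord of the smaller diagram indexed by `i` corresponds to the chord `skipAt x i`
of the original diagram (skipping the smoothed chord `x`). -/
def skipAt {n : ℕ} (x : Fin n) (i : Fin (n - 1)) : Fin n :=
  if h : i.1 < x.1 then ⟨i.1, lt_trans h x.2⟩ else ⟨i.1 + 1, by have := i.2; omega⟩

/-- Relabelling of the circle positions after vertically smoothing the chord with head at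
position `h` and foot at position `f` (on a circle with `m` positions): the two positions
`h` and `f` are deleted and the arc strictly between `h` and `f` is reversed. -/
def smoothPos (m h f p : ℕ) : ℕ :=
  let d := (f + m - (h + 1)) % m
  let r := (p + m - (h + 1)) % m
  if r < d then d - 1 - r else r - 1

/-- Vertical smoothing of the chord `x` of a Gauss diagram: the chord `x` is deleted and
the cyclic order of the arc of endpoints lying strictly between the two endpoints of `x`
is reversed. -/
def GaussDiagram.smooth (G : GaussDiagram) (x : Fin G.n) : GaussDiagram where
  n := G.n - 1
  head := fun i =>
    ⟨smoothPos (2 * G.n) (G.head x).1 (G.foot x).1 (G.head (skipAt x i)).1 % (2 * (G.n - 1)),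
      Nat.mod_lt _ (by have := i.2; omega)⟩
  foot := fun i =>
    ⟨smoothPos (2 * G.n) (G.head x).1 (G.foot x).1 (G.foot (skipAt x i)).1 % (2 * (G.n - 1)),
      Nat.mod_lt _ (by have := i.2; omega)⟩
  sign := fun i => G.sign (skipAt x i)

/-- The index of chord `i ≠ x` in the diagram obtained by smoothing the chord `x`. -/
def unskip? {n : ℕ} (x i : Fin n) : Option (Fin (n - 1)) :=
  if h : i.1 < x.1 then some ⟨i.1, by have := x.2; omega⟩
  else if h' : x.1 < i.1 then some ⟨i.1 - 1, by have := i.2; omega⟩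
  else none

/-- Smoothing a list of chords, one after the other. -/
def GaussDiagram.smoothList : (G : GaussDiagram) → List (Fin G.n) → GaussDiagram
  | G, [] => G
  | G, x :: xs => (G.smooth x).smoothList (xs.filterMap (unskip? x))
termination_by G l => l.length
decreasing_by simpa using Nat.lt_succ_of_le (List.length_filterMap_le _ _)

/-- A flat Gauss diagram: a chord diagram on the circle with no signs and no head/foot
designations. -/
structure FlatDiagram where
  n : ℕ
  fst : Fin n → Fin (2 * n)
  snd : Fin n → Fin (2 * n)

namespace FlatDiagram

/-- A genuine flat diagram: the `2n` endpoints are distinct. -/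
def Proper (F : FlatDiagram) : Prop := Function.Injective (Sum.elim F.fst F.snd)

/-- The (unordered) endpoints of the chord `y` are `u` and `v`. -/
def hasEnds (F : FlatDiagram) (y : Fin F.n) (u v : Fin (2 * F.n)) : Prop :=
  (F.fst y = u ∧ F.snd y = v) ∨ (F.fst y = v ∧ F.snd y = u)

end FlatDiagram

/-- Forgetting all signs and head/foot designations of a Gauss diagram. -/
def GaussDiagram.flatten (G : GaussDiagram) : FlatDiagram := ⟨G.n, G.head, G.foot⟩

/-- Isomorphism of flat diagrams: a bijection of chords induced by a bijection of the
circle preserving (or reversing) the cyclic order. -/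
def FlatIso (F F' : FlatDiagram) : Prop :=
  ∃ (e : Fin F.n → Fin F'.n) (φ : Fin (2 * F.n) → Fin (2 * F'.n)),
    Function.Bijective e ∧ Function.Bijective φ ∧ (CyclicMap φ ∨ AntiCyclicMap φ) ∧
    ∀ i, F'.hasEnds (e i) (φ (F.fst i)) (φ (F.snd i))

/-- Flat single chord move: insertion of a chord with adjacent endpoints. -/
def FlatSingleMove (F F' : FlatDiagram) : Prop :=
  F.Proper ∧ F'.Proper ∧ F'.n = F.n + 1 ∧
  ∃ (e : Fin F.n → Fin F'.n) (φ : Fin (2 * F.n) → Fin (2 * F'.n)) (y : Fin F'.n),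
    Function.Injective e ∧ (∀ i, e i ≠ y) ∧ CyclicMap φ ∧
    (∀ i, F'.hasEnds (e i) (φ (F.fst i)) (φ (F.snd i))) ∧
    adjPos (F'.fst y) (F'.snd y)

/-- Flat two chord move: insertion of a parallel pair of chords with pairwise adjacent
endpoints. -/
def FlatTwoMove (F F' : FlatDiagram) : Prop :=
  F.Proper ∧ F'.Proper ∧ F'.n = F.n + 2 ∧
  ∃ (e : Fin F.n → Fin F'.n) (φ : Fin (2 * F.n) → Fin (2 * F'.n)) (y₁ y₂ : Fin F'.n)
    (p q : Fin (2 * F'.n)),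
    Function.Injective e ∧ y₁ ≠ y₂ ∧ (∀ i, e i ≠ y₁ ∧ e i ≠ y₂) ∧ CyclicMap φ ∧
    (∀ i, F'.hasEnds (e i) (φ (F.fst i)) (φ (F.snd i))) ∧
    F'.hasEnds y₁ p q ∧ F'.hasEnds y₂ (psucc p) (psucc q)

/-- Flat triangle move: three chords whose six endpoints form three adjacent-position
vertex pairs slide past each other (no sign or orientation conditions). -/
def FlatTriangleMove (F F' : FlatDiagram) : Prop :=
  F.Proper ∧ F'.Proper ∧
  ∃ (e : Fin F.n → Fin F'.n) (φ : Fin (2 * F.n) → Fin (2 * F'.n))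
    (x y z : Fin F.n) (w₁ w₂ w₃ α₁ β₁ α₂ β₂ α₃ β₃ : Fin (2 * F.n)),
    Function.Bijective e ∧ Function.Bijective φ ∧ CyclicMap φ ∧
    x ≠ y ∧ y ≠ z ∧ x ≠ z ∧
    ((α₁ = w₁ ∧ β₁ = psucc w₁) ∨ (α₁ = psucc w₁ ∧ β₁ = w₁)) ∧
    ((α₂ = w₂ ∧ β₂ = psucc w₂) ∨ (α₂ = psucc w₂ ∧ β₂ = w₂)) ∧
    ((α₃ = w₃ ∧ β₃ = psucc w₃) ∨ (α₃ = psucc w₃ ∧ β₃ = w₃)) ∧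
    F.hasEnds x α₁ α₂ ∧ F.hasEnds y β₁ α₃ ∧ F.hasEnds z β₂ β₃ ∧
    F'.hasEnds (e x) (φ β₁) (φ β₂) ∧ F'.hasEnds (e y) (φ α₁) (φ β₃) ∧
    F'.hasEnds (e z) (φ α₂) (φ α₃) ∧
    (∀ i, i ≠ x → i ≠ y → i ≠ z → F'.hasEnds (e i) (φ (F.fst i)) (φ (F.snd i)))

/-- Generating relation for flat equivalence of flat diagrams. -/
def FlatRel (F F' : FlatDiagram) : Prop :=
  FlatIso F F' ∨ FlatSingleMove F F' ∨ FlatSingleMove F' F ∨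
  FlatTwoMove F F' ∨ FlatTwoMove F' F ∨ FlatTriangleMove F F' ∨ FlatTriangleMove F' F

/-- Flat equivalence classes of flat Gauss diagrams. -/
def FlatClass : Type := Quot FlatRel

/-- The flat equivalence class of a flat diagram. -/
def Fclass (F : FlatDiagram) : FlatClass := Quot.mk _ F

/-! ## The invariants `S_i` and `S_Z` -/

/-- `S_i(G) = ∑_{x ∈ V_i(G)} sgn(x) · F(G^x)`, an element of the free ℤ-module on flat
equivalence classes of flat Gauss diagrams. -/
noncomputable def Sone (G : GaussDiagram) (i : ℤ) : FlatClass →₀ ℤ :=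
  ∑ x : Fin G.n,
    if |G.parity x| = i then
      Finsupp.single (Fclass (G.smooth x).flatten) (G.sign x)
    else 0

/-- `S_Z(G) = ∑_{x̄ ∈ V_Z(G)} sgn(x₁)⋯sgn(x_n) · F(G^{x̄})`, an element of the free
ℤ-module on flat equivalence classes of flat Gauss diagrams. -/
noncomputable def SZ (G : GaussDiagram) {k : ℕ} (Z : Fin k → ℤ) : FlatClass →₀ ℤ :=
  ∑ t : Fin k → Fin G.n,
    if ∀ j, |G.parity (t j)| = Z j then
      Finsupp.single (Fclass (G.smoothList (List.ofFn t)).flatten) (∏ j, G.sign (t j))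
    else 0

section Aux

lemma arc_swap {a b p : ℕ} (hab : a ≠ b) (hpa : p ≠ a) (hpb : p ≠ b) :
    arc b a p = !arc a b p := by
  unfold arc
  split <;> split <;> simp only [← decide_not, decide_eq_decide] <;> omega

lemma bne_not_not (x y : Bool) : ((!x) != (!y)) = (x != y) := by cases x <;> cases y <;> rfl
lemma bne_comm' (x y : Bool) : (x != y) = (y != x) := by cases x <;> cases y <;> rfl

namespace GaussDiagram

variable {G : GaussDiagram}

lemma Proper.head_inj (h : G.Proper) {i j : Fin G.n} (e : G.head i = G.head j) : i = j := by
  have := h.1 (a₁ := Sum.inl i) (a₂ := Sum.inl j) (by simpa using e)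
  simpa using this

lemma Proper.foot_inj (h : G.Proper) {i j : Fin G.n} (e : G.foot i = G.foot j) : i = j := by
  have := h.1 (a₁ := Sum.inr i) (a₂ := Sum.inr j) (by simpa using e)
  simpa using this

lemma Proper.head_ne_foot (h : G.Proper) (i j : Fin G.n) : G.head i ≠ G.foot j := by
  intro e
  have := h.1 (a₁ := Sum.inl i) (a₂ := Sum.inr j) (by simpa using e)
  simp at this

lemma flip_crosses (hG : G.Proper) (S : Finset (Fin G.n)) (c x : Fin G.n) :
    (G.flipSet S).crosses c x = G.crosses c x := by
  by_cases hxc : x = c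
  · subst hxc; simp [GaussDiagram.crosses, bne_iff_ne]
    intro h; exact absurd (bne_iff_ne.mp h) (fun hh => hh rfl)
  have d1 : (G.head c).1 ≠ (G.foot c).1 := fun e => hG.head_ne_foot c c (Fin.ext e)
  have d2 : (G.head x).1 ≠ (G.head c).1 := fun e => hxc (hG.head_inj (Fin.ext e))
  have d3 : (G.head x).1 ≠ (G.foot c).1 := fun e => hG.head_ne_foot x c (Fin.ext e)
  have d4 : (G.foot x).1 ≠ (G.head c).1 := fun e => (hG.head_ne_foot c x (Fin.ext e.symm)).elim
  have d5 : (G.foot x).1 ≠ (G.foot c).1 := fun e => hxc (hG.foot_inj (Fin.ext e))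
  simp only [GaussDiagram.crosses, GaussDiagram.flipSet]
  by_cases hc : c ∈ S <;> by_cases hxS : x ∈ S <;>
    simp only [hc, hxS, if_pos, if_neg, if_true, if_false]
  · rw [arc_swap d1 d4 d5, arc_swap d1 d2 d3, bne_not_not, bne_comm']; exact rfl
  · rw [arc_swap d1 d2 d3, arc_swap d1 d4 d5, bne_not_not]; exact rfl
  · rw [bne_comm' (arc _ _ _)]; exact rfl
  · exact rfl

lemma flip_term (hG : G.Proper) (S : Finset (Fin G.n)) (c x : Fin G.n) :
    (if (G.flipSet S).crosses c x then (G.flipSet S).sign x * (G.flipSet S).inter c x else 0)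
      = (if c ∈ S then -1 else 1) *
        (if G.crosses c x then G.sign x * G.inter c x else 0) := by
  rw [flip_crosses hG]
  by_cases hcr : G.crosses c x
  · rw [if_pos hcr, if_pos hcr]
    have hxc : x ≠ c := by
      intro h; subst h; simp [GaussDiagram.crosses] at hcr
    have harc : arc (G.head c).1 (G.foot c).1 (G.foot x).1
        = !arc (G.head c).1 (G.foot c).1 (G.head x).1 := by
      have h2 := hcr
      simp only [GaussDiagram.crosses, Bool.and_eq_true, bne_iff_ne, ne_eq] at h2
      rcases h2 with ⟨-, h2⟩
      cases hh : arc (G.head c).1 (G.foot c).1 (G.head x).1 <;>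
        cases hf : arc (G.head c).1 (G.foot c).1 (G.foot x).1 <;>
        simp_all
    have d1 : (G.head c).1 ≠ (G.foot c).1 := fun e => hG.head_ne_foot c c (Fin.ext e)
    have d2 : (G.head x).1 ≠ (G.head c).1 := fun e => hxc (hG.head_inj (Fin.ext e))
    have d3 : (G.head x).1 ≠ (G.foot c).1 := fun e => hG.head_ne_foot x c (Fin.ext e)
    have d4 : (G.foot x).1 ≠ (G.head c).1 := fun e => (hG.head_ne_foot c x (Fin.ext e.symm)).elim
    have d5 : (G.foot x).1 ≠ (G.foot c).1 := fun e => hxc (hG.foot_inj (Fin.ext e))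
    simp only [GaussDiagram.inter, GaussDiagram.flipSet]
    by_cases hc : c ∈ S <;> by_cases hxS : x ∈ S <;>
      simp only [hc, hxS, if_pos, if_neg, if_true, if_false]
    · rw [arc_swap d1 d4 d5, harc]
      cases arc (G.head c).1 (G.foot c).1 (G.head x).1 <;> simp
    · rw [arc_swap d1 d2 d3]
      cases arc (G.head c).1 (G.foot c).1 (G.head x).1 <;> simp
    · rw [harc]
      cases arc (G.head c).1 (G.foot c).1 (G.head x).1 <;> simp
    · ring
  · rw [if_neg hcr, if_neg hcr, mul_zero]

lemma flip_parity (hG : G.Proper) (S : Finset (Fin G.n)) (c : Fin G.n) :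
    (G.flipSet S).parity c = (if c ∈ S then -1 else 1) * G.parity c := by
  unfold GaussDiagram.parity
  rw [Finset.mul_sum]
  exact Finset.sum_congr rfl fun y _ => flip_term hG S c y

lemma abs_flip_parity (hG : G.Proper) (S : Finset (Fin G.n)) (c : Fin G.n) :
    |(G.flipSet S).parity c| = |G.parity c| := by
  rw [flip_parity hG]
  split <;> simp [abs_mul]

lemma flip_sign (S : Finset (Fin G.n)) (c : Fin G.n) :
    (G.flipSet S).sign c = (if c ∈ S then -1 else 1) * G.sign c := by
  simp only [GaussDiagram.flipSet]
  split <;> ring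

lemma cardVTuple_flip (hG : G.Proper) (S : Finset (Fin G.n)) {k : ℕ} (Z : Fin k → ℤ) :
    (G.flipSet S).cardVTuple Z
      = ∑ t : Fin k → Fin G.n,
          (if ∀ j, |G.parity (t j)| = Z j then
            ∏ j, ((if t j ∈ S then (-1 : ℤ) else 1) * G.sign (t j)) else 0) := by
  unfold GaussDiagram.cardVTuple
  refine Finset.sum_congr rfl fun t _ => ?_
  have hcond : (∀ j, |(G.flipSet S).parity (t j)| = Z j) ↔ ∀ j, |G.parity (t j)| = Z j := by
    constructor <;> intro h j <;>
      [exact (abs_flip_parity hG S (t j)).symm.trans (h j); exact (abs_flip_parity hG S (t j)).trans (h j)]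
  by_cases h : ∀ j, |G.parity (t j)| = Z j
  · rw [if_pos (hcond.mpr h), if_pos h]
    exact Finset.prod_congr rfl fun j _ => flip_sign S (t j)
  · rw [if_neg (fun hh => h (hcond.mp hh)), if_neg h]

end GaussDiagram

lemma alt_sum_zero {m : ℕ} (i₀ : Fin m) (P : Finset (Fin m) → ℤ)
    (hP : ∀ s, P (if i₀ ∈ s then s.erase i₀ else insert i₀ s) = P s) :
    ∑ s : Finset (Fin m), (-1 : ℤ) ^ s.card * P s = 0 := by
  set e : Finset (Fin m) → Finset (Fin m) :=
    fun s => if i₀ ∈ s then s.erase i₀ else insert i₀ s with he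
  have hinv : Function.Involutive e := by
    intro s
    by_cases h : i₀ ∈ s
    · simp [he, h, Finset.notMem_erase, Finset.insert_erase h]
    · simp [he, h, Finset.mem_insert_self, Finset.erase_insert h]
  have hflip : ∀ s : Finset (Fin m), (-1 : ℤ) ^ (e s).card * P (e s)
      = -((-1 : ℤ) ^ s.card * P s) := by
    intro s
    have hPe : P (e s) = P s := hP s
    by_cases h : i₀ ∈ s
    · have hc : (s.erase i₀).card + 1 = s.card := Finset.card_erase_add_one h
      rw [hPe, he]
      simp only [h, if_true]
      rw [← hc, pow_succ]
      ring
    · have hc : (insert i₀ s).card = s.card + 1 := Finset.card_insert_of_notMem h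
      rw [hPe, he]
      simp only [h, if_false]
      rw [hc, pow_succ]
      ring
  have hsum : ∑ s : Finset (Fin m), (-1 : ℤ) ^ s.card * P s
      = ∑ s : Finset (Fin m), (-1 : ℤ) ^ (e s).card * P (e s) :=
    (Fintype.sum_bijective e hinv.bijective _ _ fun s => rfl).symm
  have h2 : ∑ s : Finset (Fin m), (-1 : ℤ) ^ (e s).card * P (e s)
      = -∑ s : Finset (Fin m), (-1 : ℤ) ^ s.card * P s := by
    rw [← Finset.sum_neg_distrib]
    exact Finset.sum_congr rfl fun s _ => hflip s
  linarith [hsum.trans h2]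

end Aux

/-- `|V_Z|` is a Vassiliev invariant of degree at most `n`: for every
Gauss diagram `G`, every `m ≥ n + 1` and every choice of `m` distinct chords
`x₁, …, x_m` of `G`, the alternating sum over all `2^m` resolutions (each resolution
flipping — interchanging head and foot and negating the sign of — the chords `x_j` with
`ε_j = -1`, i.e. with `j` in the flipping set `s`) of `|V_Z|` vanishes. -/
theorem cardVTuple_vassiliev {n : ℕ} (Z : Fin n → ℤ) (hpos : ∀ j, 0 < Z j)
    (hmono : StrictMono Z) (G : GaussDiagram) (hG : G.Proper)
    (m : ℕ) (hm : n + 1 ≤ m) (x : Fin m → Fin G.n) (hx : Function.Injective x) :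
    ∑ s : Finset (Fin m), (-1 : ℤ) ^ s.card * (G.flipSet (s.image x)).cardVTuple Z = 0 := by
  have h1 : ∀ s : Finset (Fin m),
      (-1 : ℤ) ^ s.card * (G.flipSet (s.image x)).cardVTuple Z
        = ∑ t : Fin n → Fin G.n,
            (-1 : ℤ) ^ s.card * (if ∀ j, |G.parity (t j)| = Z j then
              ∏ j, ((if t j ∈ s.image x then (-1 : ℤ) else 1) * G.sign (t j)) else 0) := by
    intro s
    rw [GaussDiagram.cardVTuple_flip hG, Finset.mul_sum]
  rw [Finset.sum_congr rfl fun s _ => h1 s, Finset.sum_comm]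
  refine Finset.sum_eq_zero fun t _ => ?_
  obtain ⟨i₀, hi₀⟩ : ∃ i₀ : Fin m, ∀ j, t j ≠ x i₀ := by
    by_contra hcon
    push_neg at hcon
    choose g hg using hcon
    have hginj : Function.Injective g := by
      intro i i' e
      apply hx
      rw [← hg i, ← hg i', e]
    have hle := Fintype.card_le_of_injective g hginj
    simp only [Fintype.card_fin] at hle
    omega
  refine alt_sum_zero i₀
    (fun s => if ∀ j, |G.parity (t j)| = Z j then
      ∏ j, ((if t j ∈ s.image x then (-1 : ℤ) else 1) * G.sign (t j)) else 0) ?_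
  intro s
  by_cases hcond : ∀ j, |G.parity (t j)| = Z j
  · rw [if_pos hcond, if_pos hcond]
    refine Finset.prod_congr rfl fun j _ => ?_
    have hmem : (t j ∈ ((if i₀ ∈ s then s.erase i₀ else insert i₀ s)).image x)
        ↔ t j ∈ s.image x := by
      simp only [Finset.mem_image]
      by_cases h : i₀ ∈ s
      · simp only [if_pos h, Finset.mem_erase]
        constructor
        · rintro ⟨a, ⟨-, ha⟩, hxa⟩
          exact ⟨a, ha, hxa⟩
        · rintro ⟨a, ha, hxa⟩
          refine ⟨a, ⟨?_, ha⟩, hxa⟩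
          rintro rfl
          exact hi₀ j hxa.symm
      · simp only [if_neg h, Finset.mem_insert]
        constructor
        · rintro ⟨a, ha | ha, hxa⟩
          · exact absurd hxa.symm (ha ▸ hi₀ j)
          · exact ⟨a, ha, hxa⟩
        · rintro ⟨a, ha, hxa⟩
          exact ⟨a, Or.inr ha, hxa⟩
    rw [if_congr hmem rfl rfl]
  · rw [if_neg hcond, if_neg hcond]
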